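/- If the n-th left diagonal of the Calkin-Wilf tree is the sequence j ↦ (a·j+b)/(c·j+d), then the (2n−1)-th left diagonal is j ↦ (a·j+b)/((a+c)·j+(b+d)) and the (2n)-th left diagonal is j ↦ ((a+c)·j+(b+d))/(c·j+d), for n > 1. -/

import Mathlib

/-- Level `n+1` (in the paper's 1-based numbering) of the Calkin–Wilf tree:
`cwLevel 0 = [(1,1)]`, and each pair `(a,b)` is replaced by `(a,a+b), (a+b,b)`
in order to pass to the next level. -/
def cwLevel : ℕ → List (ℕ × ℕ)
  | 0 => [(1, 1)]
  | n + 1 => (cwLevel n).flatMap fun p => [(p.1, p.1 + p.2), (p.1 + p.2, p.2)]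

/-- The `j`-th term (1-based) of the `n`-th left diagonal of the Calkin–Wilf
tree: the entry at position `n` (1-based) of the `(j-1)`-st level after the
first level containing position `n` (position `n` first exists at the level
with `2^(Nat.clog 2 n)` entries). -/
def cwDiag (n j : ℕ) : ℕ × ℕ :=
  (cwLevel (Nat.clog 2 n + (j - 1))).getD (n - 1) (0, 0)

lemma cw_flatMap_get (l : List (ℕ × ℕ)) (i : ℕ) (hi : i < l.length) :
    (l.flatMap fun p => [(p.1, p.1 + p.2), (p.1 + p.2, p.2)])[2 * i]? =
      (l[i]?).map (fun p => (p.1, p.1 + p.2)) ∧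
    (l.flatMap fun p => [(p.1, p.1 + p.2), (p.1 + p.2, p.2)])[2 * i + 1]? =
      (l[i]?).map (fun p => (p.1 + p.2, p.2)) := by
  induction l generalizing i with
  | nil => simp at hi
  | cons a l ih =>
    cases i with
    | zero => simp [List.flatMap_cons]
    | succ i =>
      have h2 : 2 * (i + 1) = 2 * i + 1 + 1 := by ring
      have h3 : 2 * (i + 1) + 1 = (2 * i + 1) + 1 + 1 := by ring
      have := ih i (by simpa using hi)
      simp only [List.flatMap_cons, h2, h3, List.cons_append, List.getElem?_cons_succ,
        List.nil_append]
      simpa using this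

lemma cw_flatMap_length (l : List (ℕ × ℕ)) :
    (l.flatMap fun p => [(p.1, p.1 + p.2), (p.1 + p.2, p.2)]).length = 2 * l.length := by
  induction l with
  | nil => simp
  | cons a l ih => simp [List.flatMap_cons, ih]; ring

lemma cwLevel_length (k : ℕ) : (cwLevel k).length = 2 ^ k := by
  induction k with
  | zero => rfl
  | succ k ih => rw [cwLevel, cw_flatMap_length, ih, pow_succ]; ring

lemma cwLevel_succ_getD (k i : ℕ) (hi : i < 2 ^ k) :
    (cwLevel (k + 1)).getD (2 * i) (0, 0) =
      (((cwLevel k).getD i (0, 0)).1,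
       ((cwLevel k).getD i (0, 0)).1 + ((cwLevel k).getD i (0, 0)).2) ∧
    (cwLevel (k + 1)).getD (2 * i + 1) (0, 0) =
      (((cwLevel k).getD i (0, 0)).1 + ((cwLevel k).getD i (0, 0)).2,
       ((cwLevel k).getD i (0, 0)).2) := by
  have hi' : i < (cwLevel k).length := by rw [cwLevel_length]; exact hi
  obtain ⟨h1, h2⟩ := cw_flatMap_get (cwLevel k) i hi'
  have hg : (cwLevel k)[i]? = some ((cwLevel k).getD i (0, 0)) := by
    rw [List.getD_eq_getElem _ _ hi', List.getElem?_eq_getElem hi']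
  set p := (cwLevel k).getD i (0, 0) with hp
  rw [cwLevel, List.getD_eq_getElem?_getD, List.getD_eq_getElem?_getD,
    h1, h2, hg]
  simp

lemma clog_two_mul (n : ℕ) (hn : 1 < n) : Nat.clog 2 (2 * n) = Nat.clog 2 n + 1 := by
  apply le_antisymm
  · rw [Nat.clog_le_iff_le_pow one_lt_two, pow_succ]
    have := Nat.le_pow_clog one_lt_two n
    omega
  · by_contra hc
    push_neg at hc
    have := (Nat.clog_le_iff_le_pow one_lt_two).1 (Nat.lt_succ_iff.mp hc)
    have h2 : 2 ^ (Nat.clog 2 n - 1) < n := Nat.pow_pred_clog_lt_self one_lt_two hn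
    have hk : 1 ≤ Nat.clog 2 n := Nat.clog_pos one_lt_two hn
    have : 2 ^ (Nat.clog 2 n - 1 + 1) < 2 * n := by
      rw [pow_succ]; omega
    rw [Nat.sub_add_cancel hk] at this
    omega

lemma clog_two_mul_sub_one (n : ℕ) (hn : 1 < n) :
    Nat.clog 2 (2 * n - 1) = Nat.clog 2 n + 1 := by
  apply le_antisymm
  · rw [Nat.clog_le_iff_le_pow one_lt_two]
    have := Nat.le_pow_clog one_lt_two n
    rw [pow_succ]; omega
  · by_contra hc
    push_neg at hc
    have h1 := (Nat.clog_le_iff_le_pow one_lt_two).1 (Nat.lt_succ_iff.mp hc)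
    have h2 : 2 ^ (Nat.clog 2 n - 1) < n := Nat.pow_pred_clog_lt_self one_lt_two hn
    have hk : 1 ≤ Nat.clog 2 n := Nat.clog_pos one_lt_two hn
    have h3 : 2 ^ (Nat.clog 2 n - 1 + 1) < 2 * n := by rw [pow_succ]; omega
    rw [Nat.sub_add_cancel hk] at h3
    -- 2^(clog n) is even since clog n ≥ 1
    obtain ⟨m, hm⟩ : ∃ m, Nat.clog 2 n = m + 1 := ⟨Nat.clog 2 n - 1, by omega⟩
    rw [hm, pow_succ] at h1 h3
    omega

/-- If the `n`-th left diagonal of the Calkin–Wilf tree is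
`j ↦ (a·j+b)/(c·j+d)`, then the `(2n−1)`-th left diagonal is
`j ↦ (a·j+b)/((a+c)·j+(b+d))` and the `(2n)`-th left diagonal is
`j ↦ ((a+c)·j+(b+d))/(c·j+d)`, for `n > 1`. -/
theorem cw_diag_children (n a b c d : ℕ) (hn : 1 < n)
    (h : ∀ j, 1 ≤ j → cwDiag n j = (a * j + b, c * j + d)) :
    (∀ j, 1 ≤ j → cwDiag (2 * n - 1) j = (a * j + b, (a + c) * j + (b + d))) ∧
    (∀ j, 1 ≤ j → cwDiag (2 * n) j = ((a + c) * j + (b + d), c * j + d)) := by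
  have key : ∀ j, 1 ≤ j →
      cwDiag (2 * n - 1) j = (a * j + b, (a + c) * j + (b + d)) ∧
      cwDiag (2 * n) j = ((a + c) * j + (b + d), c * j + d) := by
    intro j hj
    have hlt : n - 1 < 2 ^ (Nat.clog 2 n + (j - 1)) := by
      have h1 := Nat.le_pow_clog one_lt_two n
      have h2 : 2 ^ Nat.clog 2 n ≤ 2 ^ (Nat.clog 2 n + (j - 1)) :=
        Nat.pow_le_pow_right (by norm_num) (by omega)
      omega
    obtain ⟨hL, hR⟩ := cwLevel_succ_getD (Nat.clog 2 n + (j - 1)) (n - 1) hlt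
    have hp : (cwLevel (Nat.clog 2 n + (j - 1))).getD (n - 1) (0, 0) =
        (a * j + b, c * j + d) := h j hj
    rw [hp] at hL hR
    have e1 : Nat.clog 2 (2 * n - 1) + (j - 1) = Nat.clog 2 n + (j - 1) + 1 := by
      rw [clog_two_mul_sub_one n hn]; omega
    have e2 : Nat.clog 2 (2 * n) + (j - 1) = Nat.clog 2 n + (j - 1) + 1 := by
      rw [clog_two_mul n hn]; omega
    have i1 : 2 * n - 1 - 1 = 2 * (n - 1) := by omega
    have i2 : 2 * n - 1 = 2 * (n - 1) + 1 := by omega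
    constructor
    · rw [cwDiag, e1, i1, hL]; simp [Prod.ext_iff]; ring
    · rw [cwDiag, e2, i2, hR]; simp [Prod.ext_iff]; ring
  exact ⟨fun j hj => (key j hj).1, fun j hj => (key j hj).2⟩
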